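/- Equivalence of continuous and discrete homogeneous Sobolev norms: for u ∈ ℓ²(ℤ) with Shannon interpolation U, and any integer n ≥ 1, one has ‖u‖²_{Ḣⁿ(ℤ)} = (1/2π) ∫ 2^{2n} sin^{2n}(ω/2) |Û(ω)|² dω, and consequently (2/π)ⁿ ‖∂ₓⁿ U‖_{L²(ℝ)} ≤ ‖u‖_{Ḣⁿ(ℤ)} ≤ ‖∂ₓⁿ U‖_{L²(ℝ)}. -/

import Mathlib

noncomputable section
open MeasureTheory
open scoped ComplexConjugate

/-- The negative discrete Laplacian `(-Δ u)_g = 2 u_g - u_{g+1} - u_{g-1}`. -/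
def negLap (u : ℤ → ℂ) : ℤ → ℂ := fun g => 2 * u g - u (g + 1) - u (g - 1)

/-- The squared discrete homogeneous Sobolev norm `‖u‖_{Ḣⁿ}² = ⟨(-Δ)ⁿ u, u⟩`. -/
def sobNormSq (n : ℕ) (u : ℤ → ℂ) : ℝ :=
  (∑' g : ℤ, (negLap^[n] u) g * conj (u g)).re

namespace SobAux
open Real Set

lemma four_sin_sq_real (ω : ℝ) : 4 * Real.sin (ω/2)^2 = 2 - 2 * Real.cos ω := by
  have h := Real.cos_sq (ω/2)
  rw [show 2*(ω/2) = ω by ring] at h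
  nlinarith [Real.sin_sq_add_cos_sq (ω/2)]

lemma four_sin_sq_complex (ω : ℝ) :
    (2:ℂ) - Complex.exp (-Complex.I * ω) - Complex.exp (Complex.I * ω)
      = ((4 * Real.sin (ω/2)^2 : ℝ) : ℂ) := by
  have h1 : Complex.exp (Complex.I * ω) = Complex.cos ω + Complex.sin ω * Complex.I := by
    rw [mul_comm]; exact Complex.exp_mul_I _
  have h2 : Complex.exp (-Complex.I * ω) = Complex.cos ω - Complex.sin ω * Complex.I := by
    rw [show (-Complex.I * (ω:ℂ)) = (-(ω:ℂ)) * Complex.I by ring, Complex.exp_mul_I,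
      Complex.cos_neg, Complex.sin_neg]; ring
  rw [h1, h2, four_sin_sq_real]
  push_cast [Complex.ofReal_cos]
  ring

lemma sin_sq_le_sq (t : ℝ) : Real.sin t ^ 2 ≤ t ^ 2 := by
  have key : ∀ s : ℝ, 0 ≤ s → Real.sin s ^ 2 ≤ s ^ 2 := by
    intro s hs
    have h1 : Real.sin s ≤ s := Real.sin_le hs
    have h2 : -s ≤ Real.sin s := by
      rcases le_total s 1 with h | h
      · have := Real.sin_nonneg_of_nonneg_of_le_pi hs (h.trans (by linarith [Real.pi_gt_three]))
        linarith
      · linarith [Real.neg_one_le_sin s]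
    exact sq_le_sq' h2 h1
  rcases abs_cases t with ⟨h, _⟩ | ⟨h, _⟩
  · have := key |t| (abs_nonneg t); rwa [h] at this
  · have := key |t| (abs_nonneg t)
    rw [h, Real.sin_neg] at this
    nlinarith [this]

lemma sq_le_sin_sq {t : ℝ} (ht : |t| ≤ π/2) : (2/π * t) ^ 2 ≤ Real.sin t ^ 2 := by
  have h1 : 2/π * |t| ≤ Real.sin |t| := Real.mul_le_sin (abs_nonneg t) ht
  have h2 : (2/π * |t|)^2 ≤ Real.sin |t| ^ 2 := by
    have : (0:ℝ) ≤ 2/π * |t| := by positivity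
    exact pow_le_pow_left₀ this h1 2
  have h3 : Real.sin |t| ^ 2 = Real.sin t ^ 2 := by
    rcases abs_cases t with ⟨h, _⟩ | ⟨h, _⟩
    · rw [h]
    · rw [h, Real.sin_neg]; ring
  have h4 : (2/π * |t|)^2 = (2/π * t)^2 := by
    rcases abs_cases t with ⟨h, _⟩ | ⟨h, _⟩ <;> rw [h]
    ring
  rw [← h3, ← h4]; exact h2

/-- The multiplier `(4 sin²(ω/2))^k` as a complex number. -/
def mult (k : ℕ) (ω : ℝ) : ℂ := ((4 * Real.sin (ω/2)^2 : ℝ) : ℂ)^k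

/-- `W` multiplied by the symbol of `(-Δ)^k`. -/
def V (W : ℝ → ℂ) (k : ℕ) (ω : ℝ) : ℂ := mult k ω * W ω

/-- The character `ω ↦ e^{-i g ω}`. -/
def E (g : ℤ) (ω : ℝ) : ℂ := Complex.exp (-Complex.I * (g:ℂ) * (ω:ℂ))

lemma norm_E (g : ℤ) (ω : ℝ) : ‖E g ω‖ = 1 := by
  rw [E, show (-Complex.I * (g:ℂ) * (ω:ℂ)) = ((-((g:ℝ)*ω) : ℝ) : ℂ) * Complex.I by push_cast; ring]
  exact Complex.norm_exp_ofReal_mul_I _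

lemma continuous_mult (k : ℕ) : Continuous (mult k) := by
  unfold mult; fun_prop

lemma norm_mult_le (k : ℕ) (ω : ℝ) : ‖mult k ω‖ ≤ 4^k := by
  rw [mult, norm_pow, Complex.norm_real, Real.norm_eq_abs]
  have h1 : |4 * Real.sin (ω/2)^2| ≤ 4 := by
    rw [abs_of_nonneg (by positivity)]
    nlinarith [Real.sin_sq_le_one (ω/2)]
  calc |4 * Real.sin (ω/2)^2| ^ k ≤ 4^k := pow_le_pow_left₀ (abs_nonneg _) h1 k

lemma continuous_E (g : ℤ) : Continuous (E g) := by
  unfold E; fun_prop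

variable {W : ℝ → ℂ}

lemma integrable_VE (hWint : Integrable W) (k : ℕ) (g : ℤ) :
    Integrable (fun ω => V W k ω * E g ω) := by
  have h := hWint.bdd_mul (f := fun ω => mult k ω * E g ω)
    (((continuous_mult k).mul (continuous_E g)).aestronglyMeasurable)
    (c := 4^k) (Filter.Eventually.of_forall fun ω => by rw [norm_mul, norm_E, mul_one]; exact norm_mult_le k ω)
  exact h.congr (Filter.Eventually.of_forall fun ω => by unfold V; ring)

lemma memLp_V (hWm : MeasureTheory.AEStronglyMeasurable W volume) (hW2 : MemLp W 2 volume)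
    (k : ℕ) : MemLp (V W k) 2 volume := by
  refine MemLp.of_le_mul (c := 4^k) hW2 (((continuous_mult k).aestronglyMeasurable).mul hWm)
    (Filter.Eventually.of_forall fun ω => ?_)
  rw [V, norm_mul]
  exact mul_le_mul_of_nonneg_right (norm_mult_le k ω) (norm_nonneg _)

lemma supp_V (hWsupp : Function.support W ⊆ Icc (-π) π) (k : ℕ) :
    Function.support (V W k) ⊆ Icc (-π) π := by
  intro ω hω
  apply hWsupp
  intro h0
  exact hω (by simp [V, h0])

/-- Key induction: the `k`-th discrete Laplacian power has symbol `(4 sin²(ω/2))^k`. -/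
lemma coeff_iterate (hWint : Integrable W) {u : ℤ → ℂ}
    (hcoe : ∀ g : ℤ, u g = ((1 / (2 * π) : ℝ) : ℂ) * ∫ ω : ℝ, W ω * E g ω) :
    ∀ k (g : ℤ), (negLap^[k] u) g = ((1 / (2 * π) : ℝ) : ℂ) * ∫ ω : ℝ, V W k ω * E g ω := by
  intro k
  induction k with
  | zero =>
    intro g
    simpa [V, mult] using hcoe g
  | succ k ih =>
    intro g
    rw [Function.iterate_succ_apply', negLap, ih g, ih (g+1), ih (g-1)]
    have key : ∀ ω : ℝ, V W (k+1) ω * E g ω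
        = 2 * (V W k ω * E g ω) - V W k ω * E (g+1) ω - V W k ω * E (g-1) ω := by
      intro ω
      have e1 : E (g+1) ω = E g ω * Complex.exp (-Complex.I * ω) := by
        rw [E, E, ← Complex.exp_add]; congr 1; push_cast; ring
      have e2 : E (g-1) ω = E g ω * Complex.exp (Complex.I * ω) := by
        rw [E, E, ← Complex.exp_add]; congr 1; push_cast; ring
      rw [e1, e2]
      have h4 := four_sin_sq_complex ω
      have : V W (k+1) ω = ((4 * Real.sin (ω/2)^2 : ℝ) : ℂ) * V W k ω := by
        rw [V, V, mult, mult, pow_succ]; ring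
      rw [this, ← h4]; ring
    rw [integral_congr_ae (Filter.Eventually.of_forall key)]
    have i1 : Integrable (fun ω : ℝ => 2 * (V W k ω * E g ω) - V W k ω * E (g+1) ω) :=
      ((integrable_VE hWint k g).const_mul 2).sub (integrable_VE hWint k (g+1))
    rw [integral_sub i1 (integrable_VE hWint k (g-1)),
      integral_sub ((integrable_VE hWint k g).const_mul 2) (integrable_VE hWint k (g+1)),
      integral_const_mul]
    ring

section Circle
open AddCircle intervalIntegral

instance fact2pi : Fact (0 < 2*π) := ⟨by positivity⟩

lemma fourierCoeff_lift (f : ℝ → ℂ) (hfsupp : Function.support f ⊆ Icc (-π) π) (g : ℤ) :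
    fourierCoeff (AddCircle.liftIoc (2*π) (-π) f) g
      = ((1/(2*π):ℝ):ℂ) * ∫ ω : ℝ, f ω * E g ω := by
  rw [fourierCoeff_liftIoc_eq, fourierCoeffOn_eq_integral]
  have hle : (-π) ≤ -π + 2*π := by linarith [pi_pos]
  simp_rw [fourier_coe_apply, smul_eq_mul]
  rw [intervalIntegral.integral_of_le hle]
  have h1 : ∀ x ∈ Set.Ioc (-π) (-π + 2*π),
      Complex.exp (2 * ↑π * Complex.I * ↑(-g) * ↑x / ↑((-π + 2*π) - (-π))) * f x
        = f x * E g x := by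
    intro x _
    rw [E, mul_comm]
    congr 2
    have hπ : (π:ℂ) ≠ 0 := by exact_mod_cast Real.pi_ne_zero
    push_cast
    field_simp
    ring
  rw [setIntegral_congr_fun measurableSet_Ioc h1]
  rw [show -π + 2*π = π by ring, ← integral_Icc_eq_integral_Ioc]
  rw [setIntegral_eq_integral_of_forall_compl_eq_zero (fun x hx => by
    have : f x = 0 := Function.notMem_support.mp fun hs => hx (hfsupp hs)
    simp [this])]
  rw [Complex.real_smul, show (1 : ℝ)/(π - -π) = 1/(2*π) by ring]

lemma memLp_lift {f : ℝ → ℂ} (hfm : StronglyMeasurable f) (hf2 : MemLp f 2 volume) :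
    MemLp (AddCircle.liftIoc (2*π) (-π) f) 2 (@haarAddCircle (2*π) _) := by
  set F := AddCircle.liftIoc (2*π) (-π) f with hF
  have hFm : StronglyMeasurable F := by
    have hrfl : F = fun x => f ((AddCircle.measurableEquivIoc (2*π) (-π) x : ℝ)) := rfl
    rw [hrfl]
    exact hfm.comp_measurable
      ((measurable_subtype_coe).comp (AddCircle.measurableEquivIoc (2*π) (-π)).measurable)
  have hmp := AddCircle.measurePreserving_mk (2*π) (-π)
  have hcomp : MemLp (F ∘ (fun x : ℝ => (x : AddCircle (2*π)))) 2
      (volume.restrict (Set.Ioc (-π) (-π + 2*π))) := by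
    apply (hf2.restrict _).ae_eq
    refine (ae_restrict_iff' measurableSet_Ioc).mpr (Filter.Eventually.of_forall fun x hx => ?_)
    exact (AddCircle.liftIoc_coe_apply hx).symm
  have hvol : MemLp F 2 (volume : Measure (AddCircle (2*π))) := by
    rw [← hmp.map_eq]
    exact (memLp_map_measure_iff hFm.aestronglyMeasurable hmp.measurable.aemeasurable).mpr hcomp
  have heq : (@haarAddCircle (2*π) _)
      = (ENNReal.ofReal (2*π))⁻¹ • (volume : Measure (AddCircle (2*π))) := by
    rw [AddCircle.volume_eq_smul_haarAddCircle, smul_smul, ENNReal.inv_mul_cancel, one_smul]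
    · exact (ENNReal.ofReal_pos.mpr (by positivity)).ne'
    · exact ENNReal.ofReal_ne_top
  rw [heq]
  exact hvol.smul_measure (ENNReal.inv_ne_top.mpr ((ENNReal.ofReal_pos.mpr (by positivity)).ne'))

open scoped InnerProductSpace in
lemma parseval {f h : ℝ → ℂ} (hfm : StronglyMeasurable f) (hhm : StronglyMeasurable h)
    (hf2 : MemLp f 2 volume) (hh2 : MemLp h 2 volume)
    (hfsupp : Function.support f ⊆ Icc (-π) π) (hhsupp : Function.support h ⊆ Icc (-π) π) :
    ∑' g : ℤ, conj (((1/(2*π):ℝ):ℂ) * ∫ ω : ℝ, f ω * E g ω)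
        * (((1/(2*π):ℝ):ℂ) * ∫ ω : ℝ, h ω * E g ω)
      = ((1/(2*π):ℝ):ℂ) * ∫ ω : ℝ, conj (f ω) * h ω := by
  set F := AddCircle.liftIoc (2*π) (-π) f with hFdef
  set H := AddCircle.liftIoc (2*π) (-π) h with hHdef
  have MF := memLp_lift hfm hf2
  have MH := memLp_lift hhm hh2
  set LF : Lp ℂ 2 (@haarAddCircle (2*π) _) := MF.toLp F with hLF
  set LH : Lp ℂ 2 (@haarAddCircle (2*π) _) := MH.toLp H with hLH
  have hcF : ∀ g : ℤ, fourierCoeff (LF : AddCircle (2*π) → ℂ) g = fourierCoeff F g := by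
    intro g
    unfold fourierCoeff
    refine integral_congr_ae ?_
    filter_upwards [MF.coeFn_toLp] with t ht
    rw [ht]
  have hcH : ∀ g : ℤ, fourierCoeff (LH : AddCircle (2*π) → ℂ) g = fourierCoeff H g := by
    intro g
    unfold fourierCoeff
    refine integral_congr_ae ?_
    filter_upwards [MH.coeFn_toLp] with t ht
    rw [ht]
  have key := fourierBasis.tsum_inner_mul_inner LF LH
  have h1 : ∀ g : ℤ, ⟪LF, fourierBasis g⟫_ℂ = conj (fourierCoeff F g) := by
    intro g
    rw [← inner_conj_symm, ← HilbertBasis.repr_apply_apply, fourierBasis_repr, hcF]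
  have h2 : ∀ g : ℤ, ⟪(fourierBasis : HilbertBasis ℤ ℂ _) g, LH⟫_ℂ = fourierCoeff H g := by
    intro g
    rw [← HilbertBasis.repr_apply_apply, fourierBasis_repr, hcH]
  simp_rw [h1, h2] at key
  have hinner : ⟪LF, LH⟫_ℂ = ∫ t, conj (F t) * H t ∂(@haarAddCircle (2*π) _) := by
    rw [MeasureTheory.L2.inner_def]
    refine integral_congr_ae ?_
    filter_upwards [MF.coeFn_toLp, MH.coeFn_toLp] with t ht1 ht2
    rw [ht1, ht2, RCLike.inner_apply, mul_comm]
  have hIoc : ∫ x in Set.Ioc (-π) (-π + 2*π), conj (F ↑x) * H ↑x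
      = ∫ ω : ℝ, conj (f ω) * h ω := by
    rw [setIntegral_congr_fun measurableSet_Ioc (fun x hx => by
      rw [hFdef, hHdef, AddCircle.liftIoc_coe_apply hx, AddCircle.liftIoc_coe_apply hx])]
    rw [show -π + 2*π = π by ring, ← integral_Icc_eq_integral_Ioc]
    exact setIntegral_eq_integral_of_forall_compl_eq_zero (fun x hx => by
      have : f x = 0 := Function.notMem_support.mp fun hs => hx (hfsupp hs)
      simp [this])
  have hpre := AddCircle.integral_preimage (2*π) (-π) (fun t => conj (F t) * H t)
  rw [AddCircle.volume_eq_smul_haarAddCircle, MeasureTheory.integral_smul_measure,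
    ENNReal.toReal_ofReal (by positivity : (0:ℝ) ≤ 2*π)] at hpre
  -- hpre : ∫ x in Ioc, ... = (2*π) • ∫ ... ∂haar
  have hhaar : ∫ t, conj (F t) * H t ∂(@haarAddCircle (2*π) _)
      = ((1/(2*π):ℝ):ℂ) * ∫ ω : ℝ, conj (f ω) * h ω := by
    rw [← hIoc, hpre, Complex.real_smul, ← mul_assoc, ← Complex.ofReal_mul]
    rw [show (1/(2*π)) * (2*π) = 1 by field_simp]
    simp
  calc ∑' g : ℤ, conj (((1/(2*π):ℝ):ℂ) * ∫ ω : ℝ, f ω * E g ω)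
        * (((1/(2*π):ℝ):ℂ) * ∫ ω : ℝ, h ω * E g ω)
      = ∑' g : ℤ, conj (fourierCoeff F g) * fourierCoeff H g := by
        refine tsum_congr fun g => ?_
        rw [hFdef, hHdef, fourierCoeff_lift f hfsupp g, fourierCoeff_lift h hhsupp g]
    _ = ⟪LF, LH⟫_ℂ := key
    _ = _ := by rw [hinner, hhaar]

end Circle
end SobAux

section Main
open Real Set SobAux

/-- Equivalence of continuous and discrete homogeneous Sobolev norms: if `Û` is the
Fourier transform (supported in `[-π,π]`) of the Shannon interpolation `U` of
`u ∈ ℓ²(ℤ)`, then `‖u‖²_{Ḣⁿ(ℤ)} = (1/2π) ∫ 2^{2n} sin^{2n}(ω/2) |Û(ω)|² dω` and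
`(2/π)ⁿ ‖∂ₓⁿU‖_{L²} ≤ ‖u‖_{Ḣⁿ(ℤ)} ≤ ‖∂ₓⁿU‖_{L²}`, where
`‖∂ₓⁿU‖²_{L²} = (1/2π) ∫ ω^{2n} |Û(ω)|² dω`. -/
theorem discrete_continuous_sobolev_equiv (u : ℤ → ℂ) (hu : Memℓp u 2)
    (Uhat : ℝ → ℂ) (hint : Integrable Uhat) (hL2 : MemLp Uhat 2 volume)
    (hsupp : Function.support Uhat ⊆ Set.Icc (-Real.pi) Real.pi)
    (hinterp : ∀ g : ℤ,
      u g = ((1 / (2 * Real.pi) : ℝ) : ℂ) *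
        ∫ ω : ℝ, Uhat ω * Complex.exp (-Complex.I * g * ω))
    (n : ℕ) (hn : 1 ≤ n) :
    sobNormSq n u =
        (1 / (2 * Real.pi)) * ∫ ω : ℝ, 2 ^ (2 * n) * Real.sin (ω / 2) ^ (2 * n) * ‖Uhat ω‖ ^ 2
      ∧ (2 / Real.pi) ^ n * Real.sqrt ((1 / (2 * Real.pi)) * ∫ ω : ℝ, ω ^ (2 * n) * ‖Uhat ω‖ ^ 2)
          ≤ Real.sqrt (sobNormSq n u)
      ∧ Real.sqrt (sobNormSq n u)
          ≤ Real.sqrt ((1 / (2 * Real.pi)) * ∫ ω : ℝ, ω ^ (2 * n) * ‖Uhat ω‖ ^ 2) := by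
  classical
  -- a strongly measurable representative of `Uhat`, still supported in `[-π, π]`
  set Wm := hL2.aestronglyMeasurable.mk Uhat with hWm0
  set W : ℝ → ℂ := (Set.Icc (-Real.pi) Real.pi).indicator Wm with hWdef
  have hWsm : StronglyMeasurable W :=
    hL2.aestronglyMeasurable.stronglyMeasurable_mk.indicator measurableSet_Icc
  have hW : Uhat =ᵐ[volume] W := by
    filter_upwards [hL2.aestronglyMeasurable.ae_eq_mk] with x hx
    by_cases hmem : x ∈ Set.Icc (-Real.pi) Real.pi
    · rw [hWdef, Set.indicator_of_mem hmem]; exact hx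
    · have h0 : Uhat x = 0 := Function.notMem_support.mp fun hs => hmem (hsupp hs)
      rw [hWdef, Set.indicator_of_notMem hmem]; exact h0
  have hWsupp : Function.support W ⊆ Set.Icc (-π) π := Set.support_indicator_subset
  have hWint : Integrable W := hint.congr hW
  have hW2 : MemLp W 2 volume := hL2.ae_eq hW
  -- Fourier coefficients
  have hcoe : ∀ g : ℤ, u g = ((1/(2*π):ℝ):ℂ) * ∫ ω : ℝ, W ω * E g ω := by
    intro g
    rw [hinterp g]
    congr 1
    refine integral_congr_ae ?_
    filter_upwards [hW] with ω hω
    rw [hω]; rfl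
  have hco := coeff_iterate hWint hcoe
  have hVm : StronglyMeasurable (V W n) := ((continuous_mult n).stronglyMeasurable).mul hWsm
  have hV2 : MemLp (V W n) 2 volume := memLp_V hWsm.aestronglyMeasurable hW2 n
  have hVsupp := supp_V hWsupp n
  have hpar := parseval hWsm hVm hW2 hV2 hWsupp hVsupp
  have hts : (∑' g : ℤ, (negLap^[n] u) g * conj (u g))
      = ((1/(2*π):ℝ):ℂ) * ∫ ω : ℝ, conj (W ω) * V W n ω := by
    rw [← hpar]
    refine tsum_congr fun g => ?_
    rw [hco n g, ← hcoe g]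
    ring
  have hpow : ∀ s : ℝ, (4 * s^2)^n = 2^(2*n) * s^(2*n) := by
    intro s
    rw [mul_pow, ← pow_mul, show (4:ℝ) = 2^2 by norm_num, ← pow_mul]
  have hreal : ∀ ω : ℝ, conj (W ω) * V W n ω
      = ((2^(2*n) * Real.sin (ω/2)^(2*n) * ‖W ω‖^2 : ℝ) : ℂ) := by
    intro ω
    have hconj : conj (W ω) * W ω = ((‖W ω‖^2 : ℝ) : ℂ) := by
      rw [mul_comm, Complex.mul_conj, Complex.normSq_eq_norm_sq]
    calc conj (W ω) * V W n ω
        = ((4 * Real.sin (ω/2)^2 : ℝ):ℂ)^n * (conj (W ω) * W ω) := by rw [V, mult]; ring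
      _ = _ := by
          rw [hconj, ← Complex.ofReal_pow, ← Complex.ofReal_mul, hpow, mul_assoc]
  have hintC : (∫ ω : ℝ, conj (W ω) * V W n ω)
      = ((∫ ω : ℝ, 2^(2*n) * Real.sin (ω/2)^(2*n) * ‖W ω‖^2 : ℝ) : ℂ) := by
    rw [integral_congr_ae (Filter.Eventually.of_forall hreal)]
    have := integral_ofReal (𝕜 := ℂ) (μ := (volume : Measure ℝ))
      (f := fun ω : ℝ => 2^(2*n) * Real.sin (ω/2)^(2*n) * ‖W ω‖^2)
    simpa using this
  have hI2 : (∫ ω : ℝ, 2^(2*n) * Real.sin (ω/2)^(2*n) * ‖W ω‖^2)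
      = ∫ ω : ℝ, 2^(2*n) * Real.sin (ω/2)^(2*n) * ‖Uhat ω‖^2 :=
    integral_congr_ae (by filter_upwards [hW] with ω hω; rw [hω])
  have hmain : sobNormSq n u
      = (1/(2*π)) * ∫ ω : ℝ, 2^(2*n) * Real.sin (ω/2)^(2*n) * ‖Uhat ω‖^2 := by
    rw [sobNormSq, hts, hintC, ← Complex.ofReal_mul, Complex.ofReal_re, hI2]
  have hsq : Integrable (fun ω : ℝ => ‖Uhat ω‖^2) := hL2.norm.integrable_sq
  have hInt2 : Integrable (fun ω : ℝ => 2^(2*n) * Real.sin (ω/2)^(2*n) * ‖Uhat ω‖^2) := by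
    refine Integrable.mono' (hsq.const_mul (2^(2*n)))
      ((Continuous.aestronglyMeasurable (by fun_prop)).mul hsq.aestronglyMeasurable)
      (Filter.Eventually.of_forall fun ω => ?_)
    have e : Real.sin (ω/2)^(2*n) = (Real.sin (ω/2)^2)^n := by rw [← pow_mul]
    have h1 : (Real.sin (ω/2)^2)^n ≤ 1 :=
      pow_le_one₀ (sq_nonneg _) (Real.sin_sq_le_one _)
    rw [Real.norm_eq_abs, e, abs_of_nonneg (by positivity)]
    calc 2^(2*n) * (Real.sin (ω/2)^2)^n * ‖Uhat ω‖^2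
        ≤ 2^(2*n) * 1 * ‖Uhat ω‖^2 := by
          refine mul_le_mul_of_nonneg_right (mul_le_mul_of_nonneg_left h1 (by positivity))
            (by positivity)
      _ = 2^(2*n) * ‖Uhat ω‖^2 := by ring
  have hInt1 : Integrable (fun ω : ℝ => ω^(2*n) * ‖Uhat ω‖^2) := by
    refine Integrable.mono' (hsq.const_mul (π^(2*n)))
      ((Continuous.aestronglyMeasurable (by fun_prop)).mul hsq.aestronglyMeasurable)
      (Filter.Eventually.of_forall fun ω => ?_)
    by_cases h0 : Uhat ω = 0
    · simp [h0]
    · have hmem := hsupp (Function.mem_support.mpr h0)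
      have habs : |ω| ≤ π := abs_le.mpr ⟨hmem.1, hmem.2⟩
      calc ‖ω^(2*n) * ‖Uhat ω‖^2‖ = |ω|^(2*n) * ‖Uhat ω‖^2 := by
            rw [Real.norm_eq_abs, abs_mul, abs_pow, abs_of_nonneg (sq_nonneg ‖Uhat ω‖)]
        _ ≤ π^(2*n) * ‖Uhat ω‖^2 :=
            mul_le_mul_of_nonneg_right (pow_le_pow_left₀ (abs_nonneg _) habs _) (sq_nonneg _)
  have hle1 : ∀ ω : ℝ, 2^(2*n) * Real.sin (ω/2)^(2*n) * ‖Uhat ω‖^2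
      ≤ ω^(2*n) * ‖Uhat ω‖^2 := by
    intro ω
    refine mul_le_mul_of_nonneg_right ?_ (sq_nonneg _)
    have h1 : (4 * Real.sin (ω/2)^2)^n ≤ (4*(ω/2)^2)^n :=
      pow_le_pow_left₀ (by positivity) (by nlinarith [sin_sq_le_sq (ω/2)]) n
    have h2 : ((4*(ω/2)^2 : ℝ))^n = ω^(2*n) := by
      rw [show (4*(ω/2)^2 : ℝ) = ω^2 by ring, ← pow_mul, mul_comm]
    calc 2^(2*n) * Real.sin (ω/2)^(2*n) = (4*Real.sin (ω/2)^2)^n := (hpow _).symm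
      _ ≤ (4*(ω/2)^2)^n := h1
      _ = ω^(2*n) := h2
  have hle2 : ∀ ω : ℝ, (2/π)^(2*n) * (ω^(2*n) * ‖Uhat ω‖^2)
      ≤ 2^(2*n) * Real.sin (ω/2)^(2*n) * ‖Uhat ω‖^2 := by
    intro ω
    by_cases h0 : Uhat ω = 0
    · simp [h0]
    · have hmem := hsupp (Function.mem_support.mpr h0)
      have habs : |ω/2| ≤ π/2 := by
        rw [abs_div, abs_of_nonneg (by norm_num : (0:ℝ) ≤ 2)]
        have : |ω| ≤ π := abs_le.mpr ⟨hmem.1, hmem.2⟩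
        linarith
      have h1 : (4 * (2/π * (ω/2))^2)^n ≤ (4 * Real.sin (ω/2)^2)^n :=
        pow_le_pow_left₀ (by positivity) (by nlinarith [sq_le_sin_sq habs]) n
      have h2 : (4 * (2/π * (ω/2))^2 : ℝ) = (2/π)^2 * ω^2 := by ring
      rw [h2] at h1
      have h3 : ((2/π)^2 * ω^2 : ℝ)^n = (2/π)^(2*n) * ω^(2*n) := by
        rw [mul_pow, ← pow_mul, ← pow_mul]
      rw [h3, hpow] at h1
      calc (2/π)^(2*n) * (ω^(2*n) * ‖Uhat ω‖^2)
          = ((2/π)^(2*n) * ω^(2*n)) * ‖Uhat ω‖^2 := by ring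
        _ ≤ (2^(2*n) * Real.sin (ω/2)^(2*n)) * ‖Uhat ω‖^2 :=
            mul_le_mul_of_nonneg_right h1 (sq_nonneg _)
        _ = 2^(2*n) * Real.sin (ω/2)^(2*n) * ‖Uhat ω‖^2 := by ring
  have hcle : (0:ℝ) ≤ 1/(2*π) := by positivity
  have hBA : (1/(2*π)) * (∫ ω : ℝ, 2^(2*n) * Real.sin (ω/2)^(2*n) * ‖Uhat ω‖^2)
      ≤ (1/(2*π)) * ∫ ω : ℝ, ω^(2*n) * ‖Uhat ω‖^2 :=
    mul_le_mul_of_nonneg_left (integral_mono hInt2 hInt1 hle1) hcle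
  have hAB : (2/π)^(2*n) * ((1/(2*π)) * ∫ ω : ℝ, ω^(2*n) * ‖Uhat ω‖^2)
      ≤ (1/(2*π)) * ∫ ω : ℝ, 2^(2*n) * Real.sin (ω/2)^(2*n) * ‖Uhat ω‖^2 := by
    have h := integral_mono (hInt1.const_mul ((2/π)^(2*n))) hInt2 hle2
    rw [integral_const_mul] at h
    calc (2/π)^(2*n) * ((1/(2*π)) * ∫ ω : ℝ, ω^(2*n) * ‖Uhat ω‖^2)
        = (1/(2*π)) * ((2/π)^(2*n) * ∫ ω : ℝ, ω^(2*n) * ‖Uhat ω‖^2) := by ring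
      _ ≤ _ := mul_le_mul_of_nonneg_left h hcle
  refine ⟨hmain, ?_, ?_⟩
  · rw [hmain]
    have hsq2 : (2/π)^n * Real.sqrt ((1/(2*π)) * ∫ ω : ℝ, ω^(2*n) * ‖Uhat ω‖^2)
        = Real.sqrt ((2/π)^(2*n) * ((1/(2*π)) * ∫ ω : ℝ, ω^(2*n) * ‖Uhat ω‖^2)) := by
      rw [show (2/π:ℝ)^(2*n) = ((2/π)^n)^2 by rw [← pow_mul, mul_comm],
        Real.sqrt_mul (sq_nonneg _), Real.sqrt_sq (by positivity)]
    rw [hsq2]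
    exact Real.sqrt_le_sqrt hAB
  · rw [hmain]
    exact Real.sqrt_le_sqrt hBA

end Main
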